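/- A polynomial curve γ : ℝ → ℝ^d of componentwise degree at most k, whose squared distance to the origin is not constant, is tangent to at most 2k−1 Euclidean spheres centered at the origin; i.e., the function t ↦ ‖γ(t)‖₂² has at most 2k−1 critical points' worth of critical values, in particular finitely many. -/

import Mathlib

theorem stmt_10 {d k : ℕ} (p : Fin d → Polynomial ℝ)
    (hdeg : ∀ i, (p i).natDegree ≤ k)
    (hnc : ∃ s t : ℝ, ∑ i, (p i).eval s ^ 2 ≠ ∑ i, (p i).eval t ^ 2) :
    ((fun t : ℝ => ∑ i, (p i).eval t ^ 2) ''
        {t : ℝ | deriv (fun t : ℝ => ∑ i, (p i).eval t ^ 2) t = 0}).Finite ∧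
    ((fun t : ℝ => ∑ i, (p i).eval t ^ 2) ''
        {t : ℝ | deriv (fun t : ℝ => ∑ i, (p i).eval t ^ 2) t = 0}).ncard ≤ 2 * k - 1 := by
  set P : Polynomial ℝ := ∑ i, (p i) ^ 2 with hP
  have heval : (fun t : ℝ => ∑ i, (p i).eval t ^ 2) = fun t => P.eval t := by
    funext t; simp [hP, Polynomial.eval_finset_sum]
  have hd : (fun t : ℝ => deriv (fun t : ℝ => ∑ i, (p i).eval t ^ 2) t)
      = fun t => P.derivative.eval t := by
    funext t; rw [heval]; exact Polynomial.deriv P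
  have hD0 : P.derivative ≠ 0 := by
    intro h
    obtain ⟨s, t, hst⟩ := hnc
    have hn0 : P.natDegree = 0 := Polynomial.natDegree_eq_zero_of_derivative_eq_zero h
    obtain ⟨c, hc⟩ := Polynomial.natDegree_eq_zero.mp hn0
    apply hst
    have hs := congrFun heval s
    have ht := congrFun heval t
    rw [hs, ht, ← hc]; simp
  have hset : {t : ℝ | deriv (fun t : ℝ => ∑ i, (p i).eval t ^ 2) t = 0}
      = ↑(P.derivative.roots.toFinset) := by
    ext t
    simp only [Set.mem_setOf_eq, Finset.coe_sort_coe, Multiset.mem_toFinset,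
      Polynomial.mem_roots, hD0, Ne, not_false_iff, true_and, Finset.mem_coe]
    rw [show deriv (fun t : ℝ => ∑ i, (p i).eval t ^ 2) t = P.derivative.eval t from
      congrFun hd t]
    simp [Polynomial.IsRoot, hD0]
  have hfin : {t : ℝ | deriv (fun t : ℝ => ∑ i, (p i).eval t ^ 2) t = 0}.Finite := by
    rw [hset]; exact (P.derivative.roots.toFinset).finite_toSet
  refine ⟨hfin.image _, ?_⟩
  calc ((fun t : ℝ => ∑ i, (p i).eval t ^ 2) ''
        {t : ℝ | deriv (fun t : ℝ => ∑ i, (p i).eval t ^ 2) t = 0}).ncard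
      ≤ {t : ℝ | deriv (fun t : ℝ => ∑ i, (p i).eval t ^ 2) t = 0}.ncard :=
        Set.ncard_image_le hfin
    _ ≤ 2 * k - 1 := by
        rw [hset, Set.ncard_coe_finset]
        calc P.derivative.roots.toFinset.card
            ≤ Multiset.card P.derivative.roots := P.derivative.roots.toFinset_card_le
          _ ≤ P.derivative.natDegree := P.derivative.card_roots' 
          _ ≤ P.natDegree - 1 := Polynomial.natDegree_derivative_le P
          _ ≤ 2 * k - 1 := by
              have hPdeg : P.natDegree ≤ 2 * k := by
                apply Polynomial.natDegree_sum_le_of_forall_le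
                intro i _
                calc ((p i) ^ 2).natDegree ≤ 2 * (p i).natDegree := by
                      simpa [mul_comm] using Polynomial.natDegree_pow_le (p := p i) (n := 2)
                  _ ≤ 2 * k := Nat.mul_le_mul_left 2 (hdeg i)
              omega
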